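/- Let c ≥ 1 be an integer and consider a Second-Price Ad Auctions instance with m keywords in which every bidder's bid on every keyword is at most 1/c of its budget. For each keyword u let s_u denote the second-highest bid on u. Then the optimal second-price allocation has value at most Σ_u s_u, and the allocation that runs second-price auctions on the c keywords with the largest s_u values (with the top two bidders participating in each) achieves profit at least Σ over those c keywords of s_u ≥ (c/m)·Σ_u s_u; hence this is an m/c-approximation. -/

import Mathlib

/-- Remaining budgets in a Second-Price Ad Auctions run after `t` keywords:
when keyword `u` is allocated to the pair `(v₁, v₂)`, the winner `v₁` pays the
budget-truncated bid of `v₂`, which is deducted from `v₁`'s budget. -/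
noncomputable def budgetRem (m : ℕ) {V : Type*} [DecidableEq V]
    (b : Fin m → V → ℝ) (B : V → ℝ) (alloc : Fin m → Option (V × V)) : ℕ → V → ℝ
  | 0 => B
  | t + 1 => fun v =>
    if h : t < m then
      match alloc ⟨t, h⟩ with
      | some p =>
        if v = p.1 then
          budgetRem m b B alloc t v - min (b ⟨t, h⟩ p.2) (budgetRem m b B alloc t p.2)
        else budgetRem m b B alloc t v
      | none => budgetRem m b B alloc t v
    else budgetRem m b B alloc t v

/-- The price charged for keyword `t`: the budget-truncated bid of the selected
second-price bidder (0 if the keyword is not allocated). -/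
noncomputable def price2PAA (m : ℕ) {V : Type*} [DecidableEq V]
    (b : Fin m → V → ℝ) (B : V → ℝ) (alloc : Fin m → Option (V × V)) (t : Fin m) : ℝ :=
  match alloc t with
  | some p => min (b t p.2) (budgetRem m b B alloc t.val p.2)
  | none => 0

/-- Total revenue of a Second-Price Ad Auctions allocation. -/
noncomputable def value2PAA (m : ℕ) {V : Type*} [DecidableEq V]
    (b : Fin m → V → ℝ) (B : V → ℝ) (alloc : Fin m → Option (V × V)) : ℝ :=
  ∑ t : Fin m, price2PAA m b B alloc t

/-- Feasibility: the two selected bidders are distinct and the winner's truncated bid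
is at least the second-price bidder's truncated bid. -/
def Feasible2PAA (m : ℕ) {V : Type*} [DecidableEq V]
    (b : Fin m → V → ℝ) (B : V → ℝ) (alloc : Fin m → Option (V × V)) : Prop :=
  ∀ (t : Fin m) (p : V × V), alloc t = some p →
    p.1 ≠ p.2 ∧
    min (b t p.2) (budgetRem m b B alloc t.val p.2) ≤
      min (b t p.1) (budgetRem m b B alloc t.val p.1)


/-- Budget lower bound: after `t` keywords the remaining budget of `v` is at least
`B v` minus `(number of allocated keywords before t) * B v / c`. -/
lemma budgetRem_ge (m : ℕ) {V : Type*} [DecidableEq V]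
    (c : ℕ) (b : Fin m → V → ℝ) (B : V → ℝ) (alloc : Fin m → Option (V × V))
    (hB : ∀ v, 0 ≤ B v) (hc : 0 < c)
    (hded : ∀ (t : Fin m) (p : V × V), alloc t = some p → (c : ℝ) * b t p.2 ≤ B p.1)
    (t : ℕ) (v : V) :
    B v - ((Finset.univ.filter
        (fun u : Fin m => u.val < t ∧ (alloc u).isSome)).card : ℝ) * (B v / c)
      ≤ budgetRem m b B alloc t v := by
  induction t with
  | zero =>
      simp [budgetRem]
  | succ t ih =>
      have hq : 0 ≤ B v / c := div_nonneg (hB v) (by positivity)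
      have hmono : (Finset.univ.filter
          (fun u : Fin m => u.val < t ∧ (alloc u).isSome)).card ≤
          (Finset.univ.filter
          (fun u : Fin m => u.val < t + 1 ∧ (alloc u).isSome)).card := by
        apply Finset.card_le_card
        intro u hu
        simp only [Finset.mem_filter, Finset.mem_univ, true_and] at hu ⊢
        exact ⟨Nat.lt_succ_of_lt hu.1, hu.2⟩
      have hmono' : B v - ((Finset.univ.filter
          (fun u : Fin m => u.val < t + 1 ∧ (alloc u).isSome)).card : ℝ) * (B v / c) ≤
          B v - ((Finset.univ.filter
          (fun u : Fin m => u.val < t ∧ (alloc u).isSome)).card : ℝ) * (B v / c) := by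
        have : ((Finset.univ.filter
            (fun u : Fin m => u.val < t ∧ (alloc u).isSome)).card : ℝ) ≤
            ((Finset.univ.filter
            (fun u : Fin m => u.val < t + 1 ∧ (alloc u).isSome)).card : ℝ) := by
          exact_mod_cast hmono
        nlinarith
      rw [budgetRem]
      by_cases h : t < m
      · simp only [dif_pos h]
        rcases hp : alloc ⟨t, h⟩ with _ | p
        · exact le_trans hmono' ih
        · by_cases hv : v = p.1
          · simp only [if_pos hv]
            -- count goes up by at least one
            have hcard : (Finset.univ.filter
                (fun u : Fin m => u.val < t ∧ (alloc u).isSome)).card + 1 ≤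
                (Finset.univ.filter
                (fun u : Fin m => u.val < t + 1 ∧ (alloc u).isSome)).card := by
              have hins : insert (⟨t, h⟩ : Fin m) (Finset.univ.filter
                  (fun u : Fin m => u.val < t ∧ (alloc u).isSome)) ⊆
                  Finset.univ.filter
                  (fun u : Fin m => u.val < t + 1 ∧ (alloc u).isSome) := by
                intro u hu
                rcases Finset.mem_insert.1 hu with rfl | hu
                · simp [hp]
                · simp only [Finset.mem_filter, Finset.mem_univ, true_and] at hu ⊢
                  exact ⟨Nat.lt_succ_of_lt hu.1, hu.2⟩
              have hnm : (⟨t, h⟩ : Fin m) ∉ Finset.univ.filter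
                  (fun u : Fin m => u.val < t ∧ (alloc u).isSome) := by
                simp
              calc _ = (insert (⟨t, h⟩ : Fin m) (Finset.univ.filter
                    (fun u : Fin m => u.val < t ∧ (alloc u).isSome))).card := by
                    rw [Finset.card_insert_of_notMem hnm]
                _ ≤ _ := Finset.card_le_card hins
            have hded' : min (b ⟨t, h⟩ p.2) (budgetRem m b B alloc t p.2) ≤ B v / c := by
              have h1 : (c : ℝ) * b ⟨t, h⟩ p.2 ≤ B p.1 := hded _ _ hp
              have h2 : b ⟨t, h⟩ p.2 ≤ B v / c := by
                rw [hv]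
                rw [le_div_iff₀ (by exact_mod_cast hc)]
                linarith [h1]
              exact le_trans (min_le_left _ _) h2
            have hcard' : ((Finset.univ.filter
                (fun u : Fin m => u.val < t ∧ (alloc u).isSome)).card : ℝ) + 1 ≤
                ((Finset.univ.filter
                (fun u : Fin m => u.val < t + 1 ∧ (alloc u).isSome)).card : ℝ) := by
              exact_mod_cast hcard
            nlinarith
          · simp only [if_neg hv]
            exact le_trans hmono' ih
      · simp only [dif_neg h]
        exact le_trans hmono' ih

/-- in a 2PAA instance with `m` keywords where every bid is at most `1/c`
of the bidder's budget, with `s u` the second-highest bid on keyword `u`: every feasible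
allocation has value at most `∑ u, s u`, and running second-price auctions (with the
top two bidders) on the `c` keywords with the largest `s u` gives a feasible allocation
of value at least `(c/m) ∑ u, s u`; hence this is an `m/c`-approximation. -/
theorem stmt18 (c m : ℕ) (hc : 1 ≤ c) (hcm : c ≤ m) {V : Type*} [Fintype V]
    [DecidableEq V] (b : Fin m → V → ℝ) (B : V → ℝ)
    (hnn : ∀ u v, 0 ≤ b u v) (hsmall : ∀ u v, (c : ℝ) * b u v ≤ B v)
    (s : Fin m → ℝ)
    (hs : ∀ u : Fin m, ∃ v1 v2 : V, v1 ≠ v2 ∧ b u v2 ≤ b u v1 ∧ b u v2 = s u ∧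
      ∀ w : V, w ≠ v1 → b u w ≤ s u) :
    (∀ alloc : Fin m → Option (V × V), Feasible2PAA m b B alloc →
      value2PAA m b B alloc ≤ ∑ u : Fin m, s u) ∧
    (∃ alloc : Fin m → Option (V × V), Feasible2PAA m b B alloc ∧
      value2PAA m b B alloc ≥ ((c : ℝ) / m) * ∑ u : Fin m, s u) := by
  classical
  have hm : 0 < m := lt_of_lt_of_le hc hcm
  have hcR : (0 : ℝ) < c := by exact_mod_cast hc
  have hmR : (0 : ℝ) < m := by exact_mod_cast hm
  choose v1 v2 hne hle heq hmax using hs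
  have hs0 : ∀ u, 0 ≤ s u := fun u => (heq u) ▸ hnn u (v2 u)
  have hB : ∀ v, 0 ≤ B v := by
    intro v
    exact le_trans (mul_nonneg (by positivity) (hnn ⟨0, hm⟩ v)) (hsmall ⟨0, hm⟩ v)
  constructor
  · -- Part 1: any feasible allocation has value at most ∑ s u
    intro alloc hfeas
    unfold value2PAA
    apply Finset.sum_le_sum
    intro t _
    unfold price2PAA
    rcases hp : alloc t with _ | p
    · exact hs0 t
    · obtain ⟨hne', hcmp⟩ := hfeas t p hp
      by_cases h2 : p.2 = v1 t
      · have h1 : p.1 ≠ v1 t := fun h => hne' (h.trans h2.symm)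
        calc min (b t p.2) (budgetRem m b B alloc t.val p.2)
            ≤ min (b t p.1) (budgetRem m b B alloc t.val p.1) := hcmp
          _ ≤ b t p.1 := min_le_left _ _
          _ ≤ s t := hmax t p.1 h1
      · exact le_trans (min_le_left _ _) (hmax t p.2 h2)
  · -- Part 2: construct the allocation on the c keywords with largest s
    obtain ⟨T₀, hT₀sub, hT₀card⟩ :=
      Finset.exists_subset_card_eq (s := (Finset.univ : Finset (Fin m))) (n := c) (by simpa using hcm)
    obtain ⟨T, hTmem, hTmax⟩ := Finset.exists_max_image
      (Finset.powersetCard c (Finset.univ : Finset (Fin m))) (fun T => ∑ u ∈ T, s u)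
      ⟨T₀, Finset.mem_powersetCard.2 ⟨hT₀sub, hT₀card⟩⟩
    have hTcard : T.card = c := (Finset.mem_powersetCard.1 hTmem).2
    -- exchange argument: every element of T dominates every element outside T
    have hdom : ∀ x ∈ T, ∀ y : Fin m, y ∉ T → s y ≤ s x := by
      intro x hx y hy
      have hyx : y ∉ T.erase x := fun h => hy (Finset.mem_of_mem_erase h)
      have hT' : insert y (T.erase x) ∈
          Finset.powersetCard c (Finset.univ : Finset (Fin m)) := by
        refine Finset.mem_powersetCard.2 ⟨Finset.subset_univ _, ?_⟩
        rw [Finset.card_insert_of_notMem hyx, Finset.card_erase_of_mem hx, hTcard]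
        omega
      have := hTmax _ hT'
      rw [Finset.sum_insert hyx, Finset.sum_erase_eq_sub hx] at this
      linarith
    -- the sum over T captures at least c/m of the total
    have hkey : ((c : ℝ) / m) * ∑ u : Fin m, s u ≤ ∑ u ∈ T, s u := by
      set S := ∑ u ∈ T, s u with hS
      have hTne : T.Nonempty := Finset.card_pos.1 (by omega)
      obtain ⟨x, hx⟩ := hTne
      have hcomp : ∑ u ∈ Tᶜ, s u ≤ ((m - c : ℕ) : ℝ) * (S / c) := by
        have h1 : ∀ y ∈ Tᶜ, s y ≤ S / c := by
          intro y hy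
          have hy' : y ∉ T := Finset.mem_compl.1 hy
          have h2 : (T.card) • s y ≤ ∑ u ∈ T, s u :=
            Finset.card_nsmul_le_sum T s (s y) (fun x hx => hdom x hx y hy')
          rw [hTcard, nsmul_eq_mul] at h2
          rw [le_div_iff₀ hcR]
          linarith
        calc ∑ u ∈ Tᶜ, s u ≤ (Tᶜ.card) • (S / c) :=
              Finset.sum_le_card_nsmul _ _ _ h1
          _ = ((m - c : ℕ) : ℝ) * (S / c) := by
              rw [Finset.card_compl, hTcard, Fintype.card_fin, nsmul_eq_mul]
      have hsplit : ∑ u : Fin m, s u = S + ∑ u ∈ Tᶜ, s u := by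
        rw [hS, Finset.sum_add_sum_compl]
      have hmc : ((m - c : ℕ) : ℝ) = (m : ℝ) - c := by
        rw [Nat.cast_sub hcm]
      rw [hsplit, div_mul_eq_mul_div, div_le_iff₀ hmR]
      have hS0 : 0 ≤ S := Finset.sum_nonneg (fun u _ => hs0 u)
      have : (c : ℝ) * ∑ u ∈ Tᶜ, s u ≤ ((m : ℝ) - c) * S := by
        calc (c : ℝ) * ∑ u ∈ Tᶜ, s u ≤ (c : ℝ) * (((m - c : ℕ) : ℝ) * (S / c)) := by
              exact mul_le_mul_of_nonneg_left hcomp (le_of_lt hcR)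
          _ = ((m : ℝ) - c) * S := by rw [hmc]; field_simp
      nlinarith
    -- define the allocation
    set alloc : Fin m → Option (V × V) :=
      fun t => if t ∈ T then some (v1 t, v2 t) else none with halloc
    have halt : ∀ t ∈ T, alloc t = some (v1 t, v2 t) := by
      intro t ht; simp [halloc, ht]
    have haln : ∀ t : Fin m, t ∉ T → alloc t = none := by
      intro t ht; simp [halloc, ht]
    -- budgets never truncate on T
    have hded : ∀ (t : Fin m) (p : V × V), alloc t = some p → (c : ℝ) * b t p.2 ≤ B p.1 := by
      intro t p hp
      by_cases ht : t ∈ T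
      · rw [halt t ht] at hp
        obtain rfl : p = (v1 t, v2 t) := (Option.some.inj hp).symm
        calc (c : ℝ) * b t (v2 t) ≤ (c : ℝ) * b t (v1 t) :=
              mul_le_mul_of_nonneg_left (hle t) (le_of_lt hcR)
          _ ≤ B (v1 t) := hsmall t (v1 t)
      · rw [haln t ht] at hp; exact absurd hp (by simp)
    have hbud : ∀ t ∈ T, ∀ v : V, B v / c ≤ budgetRem m b B alloc t.val v := by
      intro t ht v
      have hge := budgetRem_ge m c b B alloc hB (by omega) hded t.val v
      have hsub : Finset.univ.filter
          (fun u : Fin m => u.val < t.val ∧ (alloc u).isSome) ⊆ T.erase t := by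
        intro u hu
        simp only [Finset.mem_filter, Finset.mem_univ, true_and] at hu
        refine Finset.mem_erase.2 ⟨?_, ?_⟩
        · intro h; subst h; exact lt_irrefl _ hu.1
        · by_contra h
          rw [haln u h] at hu
          simp at hu
      have hcard : (Finset.univ.filter
          (fun u : Fin m => u.val < t.val ∧ (alloc u).isSome)).card ≤ c - 1 := by
        calc _ ≤ (T.erase t).card := Finset.card_le_card hsub
          _ = c - 1 := by rw [Finset.card_erase_of_mem ht, hTcard]
      have hq : 0 ≤ B v / c := div_nonneg (hB v) (le_of_lt hcR)
      have hcast : ((Finset.univ.filter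
          (fun u : Fin m => u.val < t.val ∧ (alloc u).isSome)).card : ℝ) ≤ (c : ℝ) - 1 := by
        have h1 : ((c - 1 : ℕ) : ℝ) = (c : ℝ) - 1 := by
          rw [Nat.cast_sub hc]; simp
        calc _ ≤ ((c - 1 : ℕ) : ℝ) := by exact_mod_cast hcard
          _ = (c : ℝ) - 1 := h1
      have h2 : B v - ((c : ℝ) - 1) * (B v / c) = B v / c := by
        field_simp
        ring
      nlinarith
    -- the price for each keyword in T is exactly s
    have hprice : ∀ t : Fin m, price2PAA m b B alloc t = if t ∈ T then s t else 0 := by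
      intro t
      by_cases ht : t ∈ T
      · rw [if_pos ht]
        unfold price2PAA
        rw [halt t ht]
        simp only
        have h1 : b t (v2 t) ≤ budgetRem m b B alloc t.val (v2 t) := by
          have h2 : b t (v2 t) ≤ B (v2 t) / c := by
            rw [le_div_iff₀ hcR]
            linarith [hsmall t (v2 t)]
          exact le_trans h2 (hbud t ht (v2 t))
        rw [min_eq_left h1, heq]
      · rw [if_neg ht]
        unfold price2PAA
        rw [haln t ht]
    refine ⟨alloc, ?_, ?_⟩
    · -- feasibility
      intro t p hp
      have ht : t ∈ T := by
        by_contra h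
        rw [haln t h] at hp
        exact absurd hp (by simp)
      rw [halt t ht] at hp
      obtain rfl : p = (v1 t, v2 t) := (Option.some.inj hp).symm
      refine ⟨hne t, ?_⟩
      simp only
      have h1 : b t (v2 t) ≤ budgetRem m b B alloc t.val (v2 t) := by
        have h2 : b t (v2 t) ≤ B (v2 t) / c := by
          rw [le_div_iff₀ hcR]
          linarith [hsmall t (v2 t)]
        exact le_trans h2 (hbud t ht (v2 t))
      have h3 : b t (v1 t) ≤ budgetRem m b B alloc t.val (v1 t) := by
        have h4 : b t (v1 t) ≤ B (v1 t) / c := by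
          rw [le_div_iff₀ hcR]
          linarith [hsmall t (v1 t)]
        exact le_trans h4 (hbud t ht (v1 t))
      rw [min_eq_left h1, min_eq_left h3]
      exact hle t
    · -- value bound
      have hval : value2PAA m b B alloc = ∑ u ∈ T, s u := by
        unfold value2PAA
        rw [Finset.sum_congr rfl (fun t _ => hprice t)]
        simp [Finset.sum_ite_mem]
      rw [ge_iff_le, hval]
      exact hkey
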